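/- arXiv:1607.02455 — 4 statements merged into one kernel-verified Lean document; each statement's English description precedes it below -/
import Mathlib

section
/- Let u be a positive, monotonically increasing real sequence with u_n → ∞ as n → ∞, and let p, q, s be real sequences. Then s_n → s (V, p, q, u) if and only if the sequence (p∘qs)_n admits a decomposition (p∘qs)_n = v_n a_n + b_n, where a_n → s as n → ∞ and the series ∑_{n=0}^∞ b_n/u_n converges. -/
open Filter Finset Topology

/-- The Voronoi convolution `(a∘b)` of two sequences:
`(a∘b)_0 = a_0 b_0`, `(a∘b)_n = ∑_{k=0}^n a_{n-k} b_k - ∑_{k=0}^{n-1} a_{n-1-k} b_k`. -/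
noncomputable def vconv (a b : ℕ → ℝ) : ℕ → ℝ
  | 0 => a 0 * b 0
  | n + 1 => (∑ k ∈ Finset.range (n + 2), a (n + 1 - k) * b k)
      - ∑ k ∈ Finset.range (n + 1), a (n - k) * b k

/-- The Voronoi mean transform `t_n = (1/u_n) ∑_{k=0}^n p_{n-k} q_k s_k`. -/
noncomputable def vT (p q u s : ℕ → ℝ) (n : ℕ) : ℝ :=
  (1 / u n) * ∑ k ∈ Finset.range (n + 1), p (n - k) * q k * s k

/-- Increments: `v_0 = u_0`, `v_n = u_n - u_{n-1}` for `n ≥ 1`. -/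
noncomputable def inc (u : ℕ → ℝ) : ℕ → ℝ
  | 0 => u 0
  | n + 1 => u (n + 1) - u n

lemma sum_vconv (p w : ℕ → ℝ) (n : ℕ) :
    ∑ k ∈ Finset.range (n + 1), vconv p w k
      = ∑ k ∈ Finset.range (n + 1), p (n - k) * w k := by
  induction n with
  | zero => simp [vconv]
  | succ n ih =>
      rw [Finset.sum_range_succ, ih]
      show _ + vconv p w (n + 1) = _
      rw [vconv]
      ring

lemma sum_inc (u : ℕ → ℝ) (n : ℕ) :
    ∑ k ∈ Finset.range (n + 1), inc u k = u n := by
  induction n with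
  | zero => simp [inc]
  | succ n ih =>
      rw [Finset.sum_range_succ, ih]
      show u n + (u (n + 1) - u n) = u (n + 1)
      ring

/-- Weighted mean theorem: if `w ≥ 0`, partial sums of `w` tend to infinity and `c → l`,
then the `w`-weighted averages of `c` tend to `l`. -/
lemma weighted_mean (w c : ℕ → ℝ) (hw : ∀ k, 0 ≤ w k)
    (hW : Tendsto (fun n => ∑ k ∈ Finset.range n, w k) atTop atTop)
    {l : ℝ} (hc : Tendsto c atTop (𝓝 l)) :
    Tendsto (fun n => (∑ k ∈ Finset.range n, w k * c k) / ∑ k ∈ Finset.range n, w k)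
      atTop (𝓝 l) := by
  have h1 : (fun k => w k * (c k - l)) =o[atTop] w := by
    have := (Asymptotics.isBigO_refl w atTop).mul_isLittleO
      ((Asymptotics.isLittleO_one_iff ℝ).2 (tendsto_sub_nhds_zero_iff.2 hc))
    simpa using this
  have h2 := (h1.sum_range hw hW).tendsto_div_nhds_zero
  have h3 : Tendsto (fun n => (∑ k ∈ Finset.range n, w k * (c k - l))
      / (∑ k ∈ Finset.range n, w k) + l) atTop (𝓝 l) := by
    simpa using h2.add_const l
  apply h3.congr'
  filter_upwards [hW.eventually_gt_atTop 0] with n hn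
  have hn' : (∑ k ∈ Finset.range n, w k) ≠ 0 := ne_of_gt hn
  field_simp
  rw [Finset.mul_sum, ← Finset.sum_add_distrib]
  exact Finset.sum_congr rfl fun k _ => by ring

/-- Theorem 1: for positive, monotonically increasing `u` tending to `∞`,
`s_n → s (V,p,q,u)` iff `(p∘qs)_n = v_n a_n + b_n` with `a_n → s` and `∑ b_n/u_n` convergent. -/
theorem voronoi_mean_iff_decomposition (p q u s : ℕ → ℝ) (sVal : ℝ)
    (hu_pos : ∀ n, 0 < u n) (hu_mono : Monotone u)
    (hu_top : Tendsto u atTop atTop) :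
    Tendsto (vT p q u s) atTop (𝓝 sVal) ↔
      ∃ a b : ℕ → ℝ,
        (∀ n, vconv p (fun k => q k * s k) n = inc u n * a n + b n) ∧
          Tendsto a atTop (𝓝 sVal) ∧
          ∃ L : ℝ, Tendsto (fun N => ∑ n ∈ Finset.range N, b n / u n) atTop (𝓝 L) := by
  set t := vT p q u s with ht_def
  set c := vconv p (fun k => q k * s k) with hc_def
  have hu_ne : ∀ n, u n ≠ 0 := fun n => (hu_pos n).ne'
  have key : ∀ n, ∑ k ∈ Finset.range (n + 1), c k = u n * t n := by
    intro n
    rw [hc_def, sum_vconv, ht_def]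
    show _ = u n * ((1 / u n) * _)
    rw [← mul_assoc, mul_one_div, div_self (hu_ne n), one_mul]
    exact Finset.sum_congr rfl fun k _ => by ring
  have hinc_nonneg : ∀ k, 0 ≤ inc u k := by
    intro k
    cases k with
    | zero => exact (hu_pos 0).le
    | succ m => exact sub_nonneg.2 (hu_mono (Nat.le_succ m))
  constructor
  · -- forward direction
    intro ht
    refine ⟨fun n => Nat.rec 0 (fun m _ => t m) n,
      fun n => c n - inc u n * (Nat.rec 0 (fun m _ => t m) n), fun n => by ring, ?_, ?_⟩
    · rw [← tendsto_add_atTop_iff_nat 1]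
      exact ht
    · refine ⟨sVal, ?_⟩
      have hsum : ∀ n : ℕ, ∑ k ∈ Finset.range (n + 1),
          (c k - inc u k * (Nat.rec 0 (fun m _ => t m) k : ℝ)) / u k = t n := by
        intro n
        induction n with
        | zero =>
            have h0 : c 0 = u 0 * t 0 := by simpa using key 0
            simp only [zero_add, Finset.sum_range_one]
            show (c 0 - inc u 0 * 0) / u 0 = t 0
            rw [mul_zero, sub_zero, h0, mul_comm, mul_div_assoc, div_self (hu_ne 0), mul_one]
        | succ n ih =>
            rw [Finset.sum_range_succ, ih]
            have hc1 : c (n + 1) = u (n + 1) * t (n + 1) - u n * t n := by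
              have := key (n + 1)
              rw [Finset.sum_range_succ, key n] at this
              linarith
            show t n + (c (n + 1) - (u (n + 1) - u n) * t n) / u (n + 1) = t (n + 1)
            rw [hc1]
            field_simp [hu_ne (n + 1)]
            ring
      rw [← tendsto_add_atTop_iff_nat 1]
      exact ht.congr fun n => (hsum n).symm
  · -- reverse direction
    rintro ⟨a, b, hdec, ha, L, hL⟩
    have hsplit : ∀ n, t n = (∑ k ∈ Finset.range (n + 1), inc u k * a k) / u n
        + (∑ k ∈ Finset.range (n + 1), b k) / u n := by
      intro n
      have h1 : ∑ k ∈ Finset.range (n + 1), c k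
          = (∑ k ∈ Finset.range (n + 1), inc u k * a k) + ∑ k ∈ Finset.range (n + 1), b k := by
        rw [← Finset.sum_add_distrib]
        exact Finset.sum_congr rfl fun k _ => hdec k
      have := key n
      rw [h1] at this
      rw [← add_div, this, mul_comm, mul_div_assoc, div_self (hu_ne n), mul_one]
    -- part 1: weighted mean of a
    have hWsum : ∀ n, ∑ k ∈ Finset.range (n + 1), inc u k = u n := sum_inc u
    have hWtop : Tendsto (fun n => ∑ k ∈ Finset.range n, inc u k) atTop atTop := by
      rw [← tendsto_add_atTop_iff_nat 1]
      exact hu_top.congr fun n => (hWsum n).symm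
    have part1 : Tendsto (fun n => (∑ k ∈ Finset.range (n + 1), inc u k * a k) / u n)
        atTop (𝓝 sVal) := by
      have := (weighted_mean (inc u) a hinc_nonneg hWtop ha).comp (tendsto_add_atTop_nat 1)
      refine this.congr fun n => ?_
      simp only [Function.comp]
      rw [hWsum n]
    -- part 2: Kronecker's lemma
    set E : ℕ → ℝ := fun n => ∑ k ∈ Finset.range n, b k / u k with hE_def
    have hE : Tendsto E atTop (𝓝 L) := hL
    have hbE : ∀ k, b k = u k * (E (k + 1) - E k) := by
      intro k
      have hEk : E (k + 1) - E k = b k / u k := by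
        simp [hE_def, Finset.sum_range_succ]
      rw [hEk, mul_comm, div_mul_cancel₀ _ (hu_ne k)]
    set w : ℕ → ℝ := fun k => u (k + 1) - u k with hw_def
    have hw_nonneg : ∀ k, 0 ≤ w k := fun k => sub_nonneg.2 (hu_mono (Nat.le_succ k))
    have hwsum : ∀ n, ∑ k ∈ Finset.range n, w k = u n - u 0 := by
      intro n
      induction n with
      | zero => simp
      | succ n ih => rw [Finset.sum_range_succ, ih]; show _ + (u (n+1) - u n) = _; ring
    have habel : ∀ n, ∑ k ∈ Finset.range (n + 1), b k
        = u n * E (n + 1) - ∑ k ∈ Finset.range n, w k * E (k + 1) := by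
      intro n
      induction n with
      | zero =>
          rw [Finset.sum_range_one, Finset.range_zero, Finset.sum_empty, sub_zero, hbE 0]
          have hE0 : E 0 = 0 := by simp [hE_def]
          rw [hE0, sub_zero]
      | succ n ih =>
          rw [Finset.sum_range_succ, ih, hbE (n + 1), Finset.sum_range_succ]
          show _ = u (n+1) * E (n+2) - (_ + (u (n+1) - u n) * E (n+1))
          ring
    have hwtop : Tendsto (fun n => ∑ k ∈ Finset.range n, w k) atTop atTop := by
      refine Tendsto.congr (fun n => (hwsum n).symm) ?_
      exact tendsto_atTop_add_const_right _ _ hu_top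
    have hG : Tendsto (fun n => (∑ k ∈ Finset.range n, w k * E (k + 1))
        / ∑ k ∈ Finset.range n, w k) atTop (𝓝 L) :=
      weighted_mean w (fun k => E (k + 1)) hw_nonneg hwtop
        (hE.comp (tendsto_add_atTop_nat 1))
    have hratio : Tendsto (fun n => (∑ k ∈ Finset.range n, w k) / u n) atTop (𝓝 1) := by
      have h0 : Tendsto (fun n => u 0 / u n) atTop (𝓝 0) :=
        Tendsto.div_atTop tendsto_const_nhds hu_top
      have h1 : Tendsto (fun n => 1 - u 0 / u n) atTop (𝓝 1) := by
        simpa using h0.const_sub (1 : ℝ)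
      refine h1.congr fun n => ?_
      rw [hwsum n, sub_div, div_self (hu_ne n)]
    have hGu : Tendsto (fun n => (∑ k ∈ Finset.range n, w k * E (k + 1)) / u n)
        atTop (𝓝 L) := by
      have := hG.mul hratio
      rw [mul_one] at this
      apply this.congr'
      filter_upwards [hwtop.eventually_gt_atTop 0] with n hn
      rw [div_mul_div_comm, mul_comm (∑ k ∈ Finset.range n, w k) (u n),
        mul_div_mul_right _ _ (ne_of_gt hn)]
    have part2 : Tendsto (fun n => (∑ k ∈ Finset.range (n + 1), b k) / u n)
        atTop (𝓝 0) := by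
      have h1 : Tendsto (fun n => E (n + 1)
          - (∑ k ∈ Finset.range n, w k * E (k + 1)) / u n) atTop (𝓝 (L - L)) :=
        (hE.comp (tendsto_add_atTop_nat 1)).sub hGu
      rw [sub_self] at h1
      refine h1.congr fun n => ?_
      rw [habel n, sub_div, mul_comm, mul_div_assoc, div_self (hu_ne n), mul_one]
    have := part1.add part2
    rw [add_zero] at this
    exact this.congr fun n => (hsplit n).symm
end

section
/- Let u, q, ũ, q̃ be positive real sequences such that u_{n+1}/u_n → 1 as n → ∞, ũ_n → ∞ as n → ∞, and (1/ũ_n)·∑_{k=0}^n q̃_k·(u_k/q_k) → 1 as n → ∞ (i.e. u_n/q_n → 1 (V, 1, q̃, ũ)). If s is a real sequence with s_n → s (V, 1, q, u), i.e. (1/u_n)·∑_{k=0}^n q_k s_k → s, then s_n → 0 (V, 1, q̃, ũ), i.e. (1/ũ_n)·∑_{k=0}^n q̃_k s_k → 0 as n → ∞. -/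
open Filter Finset Topology

lemma lemA (c ut e : ℕ → ℝ) (hc : ∀ k, 0 ≤ c k) (hut : ∀ n, 0 < ut n)
    (hsum : Tendsto (fun n => (1 / ut n) * ∑ k ∈ Finset.range (n + 1), c k) atTop (𝓝 1))
    (htop : Tendsto ut atTop atTop) (he : Tendsto e atTop (𝓝 0)) :
    Tendsto (fun n => (1 / ut n) * ∑ k ∈ Finset.range (n + 1), c k * e k) atTop (𝓝 0) := by
  rw [Metric.tendsto_atTop]
  intro δ hδ
  have hδ4 : 0 < δ / 4 := by linarith
  obtain ⟨N, hN⟩ := (Metric.tendsto_atTop.mp he) (δ / 4) hδ4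
  have hNe : ∀ k ≥ N, |e k| ≤ δ / 4 := by
    intro k hk
    have := hN k hk
    rw [Real.dist_eq, sub_zero] at this
    linarith
  set C := ∑ k ∈ Finset.range N, c k * |e k| with hC
  have hCpos : 0 ≤ C := Finset.sum_nonneg fun k _ => mul_nonneg (hc k) (abs_nonneg _)
  have h2 : ∀ᶠ n in atTop, (1 / ut n) * ∑ k ∈ Finset.range (n + 1), c k ≤ 2 :=
    hsum.eventually (eventually_le_nhds (by norm_num : (1 : ℝ) < 2))
  have h3 : ∀ᶠ n in atTop, C / ut n ≤ δ / 4 := by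
    filter_upwards [htop.eventually_ge_atTop (C / (δ / 4))] with n h
    rw [div_le_iff₀ (hut n)]
    have := (div_le_iff₀ hδ4).mp h
    linarith [this]
  obtain ⟨M, hM⟩ := (h2.and h3).exists_forall_of_atTop
  refine ⟨max M N, fun n hn => ?_⟩
  have hnM : n ≥ M := le_trans (le_max_left _ _) hn
  have hnN : n ≥ N := le_trans (le_max_right _ _) hn
  obtain ⟨hb2, hb3⟩ := hM n hnM
  rw [Real.dist_eq, sub_zero]
  have hutn := hut n
  have hinv : (0 : ℝ) ≤ 1 / ut n := by positivity
  have habs : |(1 / ut n) * ∑ k ∈ Finset.range (n + 1), c k * e k|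
      ≤ (1 / ut n) * ∑ k ∈ Finset.range (n + 1), c k * |e k| := by
    rw [abs_mul, abs_of_nonneg hinv]
    apply mul_le_mul_of_nonneg_left _ hinv
    calc |∑ k ∈ Finset.range (n + 1), c k * e k|
        ≤ ∑ k ∈ Finset.range (n + 1), |c k * e k| := Finset.abs_sum_le_sum_abs _ _
      _ = ∑ k ∈ Finset.range (n + 1), c k * |e k| := by
          apply Finset.sum_congr rfl
          intro k _
          rw [abs_mul, abs_of_nonneg (hc k)]
  have hsplit : ∑ k ∈ Finset.range (n + 1), c k * |e k|
      = C + ∑ k ∈ Finset.Ico N (n + 1), c k * |e k| := by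
    rw [hC, Finset.range_eq_Ico, Finset.range_eq_Ico]
    exact (Finset.sum_Ico_consecutive _ (Nat.zero_le N) (by omega : N ≤ n + 1)).symm
  have htail : ∑ k ∈ Finset.Ico N (n + 1), c k * |e k|
      ≤ (δ / 4) * ∑ k ∈ Finset.range (n + 1), c k := by
    calc ∑ k ∈ Finset.Ico N (n + 1), c k * |e k|
        ≤ ∑ k ∈ Finset.Ico N (n + 1), c k * (δ / 4) := by
          apply Finset.sum_le_sum
          intro k hk
          exact mul_le_mul_of_nonneg_left (hNe k (Finset.mem_Ico.mp hk).1) (hc k)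
      _ = (δ / 4) * ∑ k ∈ Finset.Ico N (n + 1), c k := by rw [Finset.mul_sum]; exact Finset.sum_congr rfl fun k _ => mul_comm _ _
      _ ≤ (δ / 4) * ∑ k ∈ Finset.range (n + 1), c k := by
          apply mul_le_mul_of_nonneg_left _ (le_of_lt hδ4)
          rw [Finset.range_eq_Ico]
          exact Finset.sum_le_sum_of_subset_of_nonneg
            (Finset.Ico_subset_Ico (Nat.zero_le N) le_rfl) (fun k _ _ => hc k)
  have hfinal : (1 / ut n) * ∑ k ∈ Finset.range (n + 1), c k * |e k| ≤ 3 * δ / 4 := by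
    calc (1 / ut n) * ∑ k ∈ Finset.range (n + 1), c k * |e k|
        ≤ (1 / ut n) * (C + (δ / 4) * ∑ k ∈ Finset.range (n + 1), c k) := by
          apply mul_le_mul_of_nonneg_left _ hinv
          rw [hsplit]; linarith [htail]
      _ = C / ut n + (δ / 4) * ((1 / ut n) * ∑ k ∈ Finset.range (n + 1), c k) := by
          field_simp
      _ ≤ δ / 4 + (δ / 4) * 2 := by
          have := mul_le_mul_of_nonneg_left hb2 (le_of_lt hδ4)
          linarith
      _ = 3 * δ / 4 := by ring
  calc |(1 / ut n) * ∑ k ∈ Finset.range (n + 1), c k * e k| ≤ 3 * δ / 4 :=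
        le_trans habs hfinal
    _ < δ := by linarith

/-- Theorem 4: let `u, q, ũ, q̃` be positive with `u_{n+1}/u_n → 1`,
`ũ_n → ∞`, and `u_n/q_n → 1 (V,1,q̃,ũ)`. If `s_n → s (V,1,q,u)` then `s_n → 0 (V,1,q̃,ũ)`. -/
theorem voronoi_kronecker_type (u q ut qt s : ℕ → ℝ) (sVal : ℝ)
    (hu_pos : ∀ n, 0 < u n) (hq_pos : ∀ n, 0 < q n)
    (hut_pos : ∀ n, 0 < ut n) (hqt_pos : ∀ n, 0 < qt n)
    (hratio : Tendsto (fun n => u (n + 1) / u n) atTop (𝓝 1))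
    (hut_top : Tendsto ut atTop atTop)
    (hreg : Tendsto
      (fun n => (1 / ut n) * ∑ k ∈ Finset.range (n + 1), qt k * (u k / q k))
      atTop (𝓝 1))
    (hV : Tendsto
      (fun n => (1 / u n) * ∑ k ∈ Finset.range (n + 1), q k * s k)
      atTop (𝓝 sVal)) :
    Tendsto (fun n => (1 / ut n) * ∑ k ∈ Finset.range (n + 1), qt k * s k)
      atTop (𝓝 0) := by
  set t : ℕ → ℝ := fun n => (1 / u n) * ∑ k ∈ Finset.range (n + 1), q k * s k with ht
  set c : ℕ → ℝ := fun k => qt k * (u k / q k) with hc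
  set e : ℕ → ℝ := fun k => match k with
    | 0 => t 0
    | (m + 1) => t (m + 1) - (u m / u (m + 1)) * t m with he
  have hterm : ∀ k, c k * e k = qt k * s k := by
    intro k
    match k with
    | 0 =>
      show qt 0 * (u 0 / q 0) * ((1 / u 0) * ∑ k ∈ Finset.range 1, q k * s k) = qt 0 * s 0
      rw [Finset.sum_range_one]
      have h0 := ne_of_gt (hu_pos 0)
      have h0' := ne_of_gt (hq_pos 0)
      field_simp
    | (m + 1) =>
      show qt (m + 1) * (u (m + 1) / q (m + 1)) *
        ((1 / u (m + 1)) * ∑ k ∈ Finset.range (m + 2), q k * s k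
          - (u m / u (m + 1)) * ((1 / u m) * ∑ k ∈ Finset.range (m + 1), q k * s k))
        = qt (m + 1) * s (m + 1)
      have h1 : (u m / u (m + 1)) * ((1 / u m) * ∑ k ∈ Finset.range (m + 1), q k * s k)
          = (1 / u (m + 1)) * ∑ k ∈ Finset.range (m + 1), q k * s k := by
        field_simp [ne_of_gt (hu_pos m), ne_of_gt (hu_pos (m + 1))]
      rw [h1, Finset.sum_range_succ (fun k => q k * s k) (m + 1)]
      have hq := ne_of_gt (hq_pos (m + 1))
      have hu := ne_of_gt (hu_pos (m + 1))
      field_simp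
      ring
  have hcn : ∀ k, 0 ≤ c k := fun k => le_of_lt (by
    have := hqt_pos k; have := hu_pos k; have := hq_pos k; positivity)
  have hinvratio : Tendsto (fun m => u m / u (m + 1)) atTop (𝓝 1) := by
    have : Tendsto (fun m => (u (m + 1) / u m)⁻¹) atTop (𝓝 1⁻¹) :=
      hratio.inv₀ one_ne_zero
    simp only [inv_one] at this
    convert this using 2 with m
    rw [inv_div]
  have he_succ : Tendsto (fun m => e (m + 1)) atTop (𝓝 0) := by
    have : Tendsto (fun m => t (m + 1) - (u m / u (m + 1)) * t m) atTop (𝓝 (sVal - 1 * sVal)) :=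
      (hV.comp (tendsto_add_atTop_nat 1)).sub (hinvratio.mul hV)
    simpa using this
  have he0 : Tendsto e atTop (𝓝 0) := by
    rw [← tendsto_add_atTop_iff_nat 1]
    exact he_succ
  have key := lemA c ut e hcn hut_pos hreg hut_top he0
  refine key.congr fun n => ?_
  congr 1
  exact Finset.sum_congr rfl fun k _ => hterm k
end

section
/- Let u: [0,∞) → (0,∞) be continuous, strictly increasing to ∞ (hence invertible) with u(x)/u(⌊x⌋) → 1 as x → ∞, and let p, q, s be real sequences. Then t_x := (1/u(x))·∑_{0 ≤ k ≤ x} (p∘qs)_k → s as x → ∞ through real values if and only if for every λ > 1, c_x(λ) := (1/u(x))·∑_{w_λ(x) < k ≤ x} (p∘qs)_k → (1 − λ⁻¹)·s as x → ∞ through real values. -/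
open Filter Finset Topology

/-- `w_λ(x) = u⁻¹(u(x)/λ)`, the inverse taken on `[0,∞)`. -/
noncomputable def wl (u : ℝ → ℝ) (lam x : ℝ) : ℝ :=
  Function.invFunOn u (Set.Ici 0) (u x / lam)

/-- The Voronoi moving average `c_x = (1/u(x)) ∑_{w_λ(x) < k ≤ x} a_k`. -/
noncomputable def movAvg (u : ℝ → ℝ) (a : ℕ → ℝ) (lam x : ℝ) : ℝ :=
  (1 / u x) * ∑ k ∈ Finset.range (⌊x⌋₊ + 1),
    if wl u lam x < (k : ℝ) then a k else 0

/-- The continuous Voronoi mean `t_x = (1/u(x)) ∑_{0 ≤ k ≤ x} a_k`. -/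
noncomputable def contMean (u : ℝ → ℝ) (a : ℕ → ℝ) (x : ℝ) : ℝ :=
  (1 / u x) * ∑ k ∈ Finset.range (⌊x⌋₊ + 1), a k

private lemma sum_ite_ge (f : ℕ → ℝ) {m n : ℕ} (h : m ≤ n) :
    ∑ k ∈ Finset.range n, (if m ≤ k then f k else 0)
      = ∑ k ∈ Finset.range n, f k - ∑ k ∈ Finset.range m, f k := by
  rw [← Finset.sum_filter]
  have : Finset.filter (fun k => m ≤ k) (Finset.range n) = Finset.Ico m n := by
    ext k
    simp [Finset.mem_filter, Finset.mem_Ico, and_comm]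
  rw [this, Finset.sum_Ico_eq_sub _ h]

section aux

variable {u : ℝ → ℝ}

private lemma exists_preimage (hcont : ContinuousOn u (Set.Ici 0))
    (htop : Tendsto u atTop atTop) {y : ℝ} (hy : u 0 ≤ y) :
    ∃ x ∈ Set.Ici (0 : ℝ), u x = y := by
  obtain ⟨b, hb1, hb2⟩ := ((htop.eventually_ge_atTop y).and (eventually_ge_atTop (0 : ℝ))).exists
  have : y ∈ Set.Icc (u 0) (u b) := ⟨hy, hb1⟩
  have himg := intermediate_value_Icc hb2 (hcont.mono (Set.Icc_subset_Ici_self)) this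
  obtain ⟨x, hx, hxy⟩ := himg
  exact ⟨x, hx.1, hxy⟩

private lemma wl_spec (hcont : ContinuousOn u (Set.Ici 0))
    (htop : Tendsto u atTop atTop) {lam x : ℝ} (h : u 0 ≤ u x / lam) :
    0 ≤ wl u lam x ∧ u (wl u lam x) = u x / lam := by
  obtain ⟨z, hz, hz'⟩ := exists_preimage hcont htop h
  exact ⟨Function.invFunOn_mem ⟨z, hz, hz'⟩, Function.invFunOn_eq ⟨z, hz, hz'⟩⟩

private lemma wl_tendsto (hcont : ContinuousOn u (Set.Ici 0))
    (hmono : StrictMonoOn u (Set.Ici 0))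
    (htop : Tendsto u atTop atTop) {lam : ℝ} (hlam : 0 < lam) :
    Tendsto (wl u lam) atTop atTop := by
  rw [tendsto_atTop]
  intro A
  set A' := max A 0 with hA'
  have hA'0 : (0 : ℝ) ≤ A' := le_max_right _ _
  have hu0A' : u 0 ≤ u A' :=
    (hmono.le_iff_le (Set.self_mem_Ici) (Set.mem_Ici.2 hA'0)).2 hA'0
  filter_upwards [htop.eventually_ge_atTop (lam * u A')] with x hx
  have hdiv : u A' ≤ u x / lam := (le_div_iff₀ hlam).2 (by linarith [mul_comm lam (u A')])
  have h0 : u 0 ≤ u x / lam := le_trans hu0A' hdiv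
  obtain ⟨hw0, hwu⟩ := wl_spec hcont htop h0
  have : A' ≤ wl u lam x := by
    have := (hmono.le_iff_le (Set.mem_Ici.2 hA'0) (Set.mem_Ici.2 hw0)).1
      (by rw [hwu]; exact hdiv)
    exact this
  exact le_trans (le_max_left A 0) this

private lemma movAvg_eq (a : ℕ → ℝ) (hpos : ∀ x ≥ (0 : ℝ), 0 < u x)
    (hcont : ContinuousOn u (Set.Ici 0))
    (hmono : StrictMonoOn u (Set.Ici 0))
    (htop : Tendsto u atTop atTop)
    {lam x : ℝ} (hlam : 1 ≤ lam) (hx : 0 ≤ x) (h : u 0 * lam ≤ u x) :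
    movAvg u a lam x = contMean u a x - (1 / lam) * contMean u a (wl u lam x) := by
  have hlam0 : (0 : ℝ) < lam := lt_of_lt_of_le one_pos hlam
  have hu00 : 0 < u 0 := hpos 0 le_rfl
  have hdiv : u 0 ≤ u x / lam := (le_div_iff₀ hlam0).2 h
  obtain ⟨hw0, hwu⟩ := wl_spec hcont htop hdiv
  set w := wl u lam x with hwdef
  have hux : 0 < u x := hpos x hx
  have huw : 0 < u w := by rw [hwu]; exact lt_of_lt_of_le hu00 hdiv
  have hwx : w ≤ x := by
    have h1 : u w ≤ u x := by rw [hwu]; exact div_le_self hux.le hlam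
    exact (hmono.le_iff_le (Set.mem_Ici.2 hw0) (Set.mem_Ici.2 hx)).1 h1
  have hfl : ⌊w⌋₊ + 1 ≤ ⌊x⌋₊ + 1 := Nat.succ_le_succ (Nat.floor_mono hwx)
  have hite : ∀ k ∈ Finset.range (⌊x⌋₊ + 1),
      (if w < (k : ℝ) then a k else 0) = (if ⌊w⌋₊ + 1 ≤ k then a k else 0) := by
    intro k _
    have hiff : w < (k : ℝ) ↔ ⌊w⌋₊ + 1 ≤ k := by
      rw [Nat.add_one_le_iff, Nat.floor_lt hw0]
    by_cases hc : w < (k : ℝ)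
    · rw [if_pos hc, if_pos (hiff.1 hc)]
    · rw [if_neg hc, if_neg (fun hh => hc (hiff.2 hh))]
  have hsum : ∑ k ∈ Finset.range (⌊x⌋₊ + 1), (if w < (k : ℝ) then a k else 0)
      = ∑ k ∈ Finset.range (⌊x⌋₊ + 1), a k - ∑ k ∈ Finset.range (⌊w⌋₊ + 1), a k := by
    rw [Finset.sum_congr rfl hite, sum_ite_ge a hfl]
  have huxw : u x = lam * u w := by
    rw [hwu]; field_simp
  unfold movAvg contMean
  rw [hsum, huxw]
  field_simp

end aux

/-- generalized version for an arbitrary sequence. -/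
private theorem contVoronoi_iff_gen (u : ℝ → ℝ) (a : ℕ → ℝ) (sVal : ℝ)
    (hpos : ∀ x ≥ (0 : ℝ), 0 < u x)
    (hcont : ContinuousOn u (Set.Ici 0))
    (hmono : StrictMonoOn u (Set.Ici 0))
    (htop : Tendsto u atTop atTop) :
    Tendsto (contMean u a) atTop (𝓝 sVal) ↔
      ∀ lam : ℝ, 1 < lam →
        Tendsto (movAvg u a lam) atTop (𝓝 ((1 - lam⁻¹) * sVal)) := by
  have hu00 : 0 < u 0 := hpos 0 le_rfl
  constructor
  · intro ht lam hlam
    have hlam0 : (0 : ℝ) < lam := lt_trans one_pos hlam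
    have hw := wl_tendsto hcont hmono htop hlam0
    have hlim : Tendsto (fun x => contMean u a x - (1 / lam) * contMean u a (wl u lam x))
        atTop (𝓝 (sVal - (1 / lam) * sVal)) :=
      ht.sub ((ht.comp hw).const_mul _)
    have heq : (1 - lam⁻¹) * sVal = sVal - (1 / lam) * sVal := by ring
    rw [heq]
    refine hlim.congr' ?_
    filter_upwards [htop.eventually_ge_atTop (u 0 * lam), eventually_ge_atTop (0 : ℝ)]
      with x h1 h2
    exact (movAvg_eq a hpos hcont hmono htop hlam.le h2 h1).symm
  · intro hc
    set t := contMean u a with htdef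
    set c := movAvg u a 2 with hcdef
    have h2 := hc 2 one_lt_two
    have hv : ((1 : ℝ) - 2⁻¹) * sVal = sVal / 2 := by ring
    rw [hv] at h2
    -- recursion identity
    have hrec : ∀ x : ℝ, 0 ≤ x → u 0 * 2 ≤ u x →
        t x = c x + (1 / 2) * t (wl u 2 x) := by
      intro x hx h
      have := movAvg_eq a hpos hcont hmono htop (by norm_num : (1:ℝ) ≤ 2) hx h
      rw [← hcdef, ← htdef] at this
      linarith
    have hwt : Tendsto (wl u 2) atTop atTop :=
      wl_tendsto hcont hmono htop (by norm_num)
    -- Step 1: boundedness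
    set B := |sVal| + 1 with hBdef
    have hB0 : 0 ≤ B := by positivity
    obtain ⟨X0', hX0'⟩ := eventually_atTop.1
      (((Metric.tendsto_nhds.1 h2 1 one_pos).and
        (htop.eventually_ge_atTop (u 0 * 2))))
    set X0 := max X0' 0 with hX0def
    have hX00 : (0 : ℝ) ≤ X0 := le_max_right _ _
    have hX0 : ∀ x ≥ X0, |c x| ≤ B ∧ u 0 * 2 ≤ u x := by
      intro x hx
      obtain ⟨hd, hu⟩ := hX0' x (le_trans (le_max_left _ _) hx)
      rw [Real.dist_eq] at hd
      refine ⟨?_, hu⟩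
      have habs : |sVal / 2| ≤ |sVal| := by
        rw [abs_div]
        simp only [abs_two]
        linarith [abs_nonneg sVal, abs_div sVal 2]
      calc |c x| = |(c x - sVal / 2) + sVal / 2| := by ring_nf
        _ ≤ |c x - sVal / 2| + |sVal / 2| := abs_add_le _ _
        _ ≤ B := by rw [hBdef]; linarith
    have huX0 : 0 < u X0 := hpos X0 hX00
    obtain ⟨X1, hX11, hX12⟩ :=
      ((htop.eventually_ge_atTop (2 * u X0)).and (eventually_ge_atTop X0)).exists
    have hX10 : (0 : ℝ) ≤ X1 := le_trans hX00 hX12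
    set K := (∑ k ∈ Finset.range (⌊X1⌋₊ + 1), |a k|) / u 0 with hKdef
    have hK0 : 0 ≤ K := by
      apply div_nonneg _ hu00.le
      exact Finset.sum_nonneg fun k _ => abs_nonneg _
    have hptwise : ∀ x : ℝ, 0 ≤ x → x ≤ X1 → |t x| ≤ K := by
      intro x hx hxX1
      have hux : 0 < u x := hpos x hx
      have hu0x : u 0 ≤ u x :=
        (hmono.le_iff_le Set.self_mem_Ici (Set.mem_Ici.2 hx)).2 hx
      have hsub : Finset.range (⌊x⌋₊ + 1) ⊆ Finset.range (⌊X1⌋₊ + 1) :=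
        Finset.range_subset_range.2 (Nat.succ_le_succ (Nat.floor_mono hxX1))
      have h1 : |∑ k ∈ Finset.range (⌊x⌋₊ + 1), a k| ≤ ∑ k ∈ Finset.range (⌊X1⌋₊ + 1), |a k| :=
        le_trans (Finset.abs_sum_le_sum_abs _ _)
          (Finset.sum_le_sum_of_subset_of_nonneg hsub (fun k _ _ => abs_nonneg _))
      rw [htdef]
      unfold contMean
      rw [abs_mul, abs_of_pos (by positivity : (0:ℝ) < 1 / u x)]
      have h2 : 1 / u x ≤ 1 / u 0 := one_div_le_one_div_of_le hu00 hu0x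
      calc (1 / u x) * |∑ k ∈ Finset.range (⌊x⌋₊ + 1), a k|
          ≤ (1 / u 0) * (∑ k ∈ Finset.range (⌊X1⌋₊ + 1), |a k|) := by
            apply mul_le_mul h2 h1 (abs_nonneg _) (by positivity)
        _ = K := by rw [hKdef]; ring
    have hbnd_aux : ∀ n : ℕ, ∀ x : ℝ, X0 ≤ x → u x ≤ 2 ^ n * (2 * u X0) →
        |t x| ≤ 2 * B + K := by
      intro n
      induction n with
      | zero =>
        intro x hxX0 hux
        simp only [pow_zero, one_mul] at hux
        have hxX1 : x ≤ X1 := by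
          have : u x ≤ u X1 := le_trans hux hX11
          exact (hmono.le_iff_le (Set.mem_Ici.2 (le_trans hX00 hxX0))
            (Set.mem_Ici.2 hX10)).1 this
        linarith [hptwise x (le_trans hX00 hxX0) hxX1]
      | succ n ih =>
        intro x hxX0 hux
        by_cases hcase : u x ≤ 2 * u X0
        · have hxX1 : x ≤ X1 := by
            have : u x ≤ u X1 := le_trans hcase hX11
            exact (hmono.le_iff_le (Set.mem_Ici.2 (le_trans hX00 hxX0))
              (Set.mem_Ici.2 hX10)).1 this
          linarith [hptwise x (le_trans hX00 hxX0) hxX1]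
        · push_neg at hcase
          obtain ⟨hcb, huu⟩ := hX0 x hxX0
          have hx0 : (0 : ℝ) ≤ x := le_trans hX00 hxX0
          have hid := hrec x hx0 huu
          have hdiv : u 0 ≤ u x / 2 := by linarith
          obtain ⟨hw0, hwu⟩ := wl_spec hcont htop hdiv
          have hwX0 : X0 ≤ wl u 2 x := by
            have h1 : u X0 ≤ u (wl u 2 x) := by rw [hwu]; linarith
            exact (hmono.le_iff_le (Set.mem_Ici.2 hX00) (Set.mem_Ici.2 hw0)).1 h1
          have hwle : u (wl u 2 x) ≤ 2 ^ n * (2 * u X0) := by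
            rw [hwu]
            rw [pow_succ] at hux
            linarith
          have hih := ih (wl u 2 x) hwX0 hwle
          rw [hid]
          calc |c x + 1 / 2 * t (wl u 2 x)| ≤ |c x| + |1 / 2 * t (wl u 2 x)| := abs_add_le _ _
            _ = |c x| + (1 / 2) * |t (wl u 2 x)| := by rw [abs_mul]; norm_num
            _ ≤ B + (1 / 2) * (2 * B + K) := by
                have := mul_le_mul_of_nonneg_left hih (by norm_num : (0:ℝ) ≤ 1/2)
                linarith
            _ ≤ 2 * B + K := by linarith
    have hbnd : ∀ x : ℝ, X0 ≤ x → |t x| ≤ 2 * B + K := by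
      intro x hx
      obtain ⟨n, hn⟩ := pow_unbounded_of_one_lt (u x / (2 * u X0)) (one_lt_two (α := ℝ))
      apply hbnd_aux n x hx
      have h2u : (0 : ℝ) < 2 * u X0 := by linarith
      calc u x = (u x / (2 * u X0)) * (2 * u X0) := by field_simp
        _ ≤ 2 ^ n * (2 * u X0) := by nlinarith
    -- Step 2: convergence
    set C := 2 * B + K + |sVal| with hCdef
    have hC0 : 0 ≤ C := by positivity
    have main : ∀ ε : ℝ, 0 < ε → ∀ N : ℕ,
        ∀ᶠ x in atTop, |t x - sVal| ≤ ε + (1 / 2) ^ N * C := by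
      intro ε hε N
      induction N with
      | zero =>
        filter_upwards [eventually_ge_atTop X0] with x hx
        have := hbnd x hx
        have h1 : |t x - sVal| ≤ |t x| + |sVal| := abs_sub _ _
        simp only [pow_zero, one_mul]
        rw [hCdef]
        linarith
      | succ n ih =>
        filter_upwards [hwt.eventually ih,
          Metric.tendsto_nhds.1 h2 (ε / 4) (by positivity),
          htop.eventually_ge_atTop (u 0 * 2), eventually_ge_atTop (0 : ℝ)]
          with x h1 hd h3 h4
        rw [Real.dist_eq] at hd
        have hid := hrec x h4 h3
        have hkey : t x - sVal = (c x - sVal / 2) + (1 / 2) * (t (wl u 2 x) - sVal) := by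
          rw [hid]; ring
        rw [hkey]
        calc |(c x - sVal / 2) + (1 / 2) * (t (wl u 2 x) - sVal)|
            ≤ |c x - sVal / 2| + |(1 / 2) * (t (wl u 2 x) - sVal)| := abs_add_le _ _
          _ = |c x - sVal / 2| + (1 / 2) * |t (wl u 2 x) - sVal| := by rw [abs_mul]; norm_num
          _ ≤ ε / 4 + (1 / 2) * (ε + (1 / 2) ^ n * C) := by
              have := mul_le_mul_of_nonneg_left h1 (by norm_num : (0:ℝ) ≤ 1/2)
              linarith
          _ ≤ ε + (1 / 2) ^ (n + 1) * C := by
              rw [pow_succ]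
              ring_nf
              linarith
    rw [Metric.tendsto_nhds]
    intro ε hε
    have hpow : Tendsto (fun N : ℕ => (1 / 2 : ℝ) ^ N * C) atTop (𝓝 0) := by
      have := tendsto_pow_atTop_nhds_zero_of_lt_one
        (by norm_num : (0:ℝ) ≤ 1/2) (by norm_num : (1/2 : ℝ) < 1)
      simpa using this.mul_const C
    obtain ⟨N, hN⟩ := ((hpow.eventually (eventually_lt_nhds (by linarith : (0:ℝ) < ε / 2)))).exists
    filter_upwards [main (ε / 4) (by linarith) N] with x hx
    rw [Real.dist_eq]
    calc |t x - sVal| ≤ ε / 4 + (1 / 2) ^ N * C := hx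
      _ < ε / 4 + ε / 2 := by linarith
      _ < ε := by linarith

/-- Theorem 7: `s_n → s (V_x,p,q,u(x))` iff
`s_n → s (𝒱_x,p,q,u(x),λ)` for all `λ > 1` (limits through a continuous variable). -/
theorem contVoronoi_iff_contMovingAverage (u : ℝ → ℝ) (p q s : ℕ → ℝ) (sVal : ℝ)
    (hpos : ∀ x ≥ (0 : ℝ), 0 < u x)
    (hcont : ContinuousOn u (Set.Ici 0))
    (hmono : StrictMonoOn u (Set.Ici 0))
    (htop : Tendsto u atTop atTop)
    (hfloor : Tendsto (fun x : ℝ => u x / u (⌊x⌋₊ : ℝ)) atTop (𝓝 1)) :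
    Tendsto (contMean u (vconv p (fun k => q k * s k))) atTop (𝓝 sVal) ↔
      ∀ lam : ℝ, 1 < lam →
        Tendsto (movAvg u (vconv p (fun k => q k * s k)) lam) atTop
          (𝓝 ((1 - lam⁻¹) * sVal)) := by
  exact contVoronoi_iff_gen u _ sVal hpos hcont hmono htop
end

section
/- Let p, q, u, s be real sequences and suppose: v_n > 0 for all n; v_n = O(1/n); u_n → ∞ as n → ∞; the power series D(x) := ∑_{n=0}^∞ v_n xⁿ has radius of convergence 1; and (p∘qs)_n/v_n − (p∘qs)_{n−1}/v_{n−1} = o(v_n/u_n) as n → ∞. If N(x)/D(x) → s as x → 1−, where N(x) := ∑_{n=0}^∞ (p∘qs)_n xⁿ, then (p∘qs)_n/v_n → s as n → ∞. -/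
open Filter Finset Topology Asymptotics


set_option maxHeartbeats 2000000 in
private lemma tauber_core (v u a : ℕ → ℝ) (sVal C : ℝ)
    (hu : ∀ n, u n = ∑ k ∈ Finset.range (n + 1), v k)
    (hv_pos : ∀ n, 0 < v n)
    (hC : 0 < C) (hvC : ∀ n : ℕ, 1 ≤ n → v n ≤ C / n)
    (hu_top : Tendsto u atTop atTop)
    (hl : ∀ ε : ℝ, 0 < ε → ∃ N : ℕ, 1 ≤ N ∧ ∀ n, N ≤ n →
      |a n / v n - a (n - 1) / v (n - 1)| ≤ ε * (v n / u n))
    (hA : Tendsto (fun x : ℝ => (∑' n : ℕ, a n * x ^ n) / ∑' n : ℕ, v n * x ^ n)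
      (nhdsWithin 1 (Set.Iio 1)) (𝓝 sVal)) :
    Tendsto (fun n => a n / v n) atTop (𝓝 sVal) := by
  set c : ℕ → ℝ := fun n => a n / v n with hcdef
  have hak : ∀ k, c k * v k = a k := fun k => div_mul_cancel₀ (a k) (hv_pos k).ne'
  have hcv : ∀ k, |c k| * v k = |a k| := fun k => by
    rw [← abs_of_pos (hv_pos k), ← abs_mul, hak k]
  -- basic facts about u
  have hu0 : ∀ n, 0 < u n := by
    intro n
    rw [hu]
    exact Finset.sum_pos (fun i _ => hv_pos i) Finset.nonempty_range_add_one
  have humono : Monotone u := by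
    apply monotone_nat_of_le_succ
    intro n
    rw [hu n, hu (n + 1), Finset.sum_range_succ v (n + 1)]
    linarith [hv_pos (n + 1)]
  have udiff : ∀ k n : ℕ, k ≤ n → u n - u k = ∑ j ∈ Finset.Ico (k + 1) (n + 1), v j := by
    intro k n h
    rw [hu, hu, Finset.sum_Ico_eq_sub _ (by omega)]
  -- telescoping estimates
  have cdiff1 : ∀ (ε : ℝ) (N : ℕ), (∀ m, N ≤ m → |c m - c (m - 1)| ≤ ε * (v m / u m)) →
      ∀ k n : ℕ, N ≤ k → k ≤ n →
        |c n - c k| ≤ ε * ∑ j ∈ Finset.Ico (k + 1) (n + 1), v j / u j := by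
    intro ε N hN k n hNk hkn
    induction n, hkn using Nat.le_induction with
    | base => simp
    | succ m hm ih =>
      have hstep := hN (m + 1) (by omega)
      simp only [Nat.add_sub_cancel] at hstep
      calc |c (m + 1) - c k| ≤ |c (m + 1) - c m| + |c m - c k| := abs_sub_le _ _ _
        _ ≤ ε * (v (m + 1) / u (m + 1)) + ε * ∑ j ∈ Finset.Ico (k + 1) (m + 1), v j / u j :=
            add_le_add hstep ih
        _ = ε * ∑ j ∈ Finset.Ico (k + 1) (m + 1 + 1), v j / u j := by
            rw [Finset.sum_Ico_succ_top (by omega : k + 1 ≤ m + 1)]; ring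
  have wsum : ∀ k n : ℕ, k ≤ n →
      ∑ j ∈ Finset.Ico (k + 1) (n + 1), v j / u j ≤ (u n - u k) / u k := by
    intro k n h
    rw [udiff k n h, Finset.sum_div]
    apply Finset.sum_le_sum
    intro j hj
    have hkj : k ≤ j := by have := (Finset.mem_Ico.1 hj).1; omega
    rw [div_le_div_iff₀ (hu0 j) (hu0 k)]
    exact mul_le_mul_of_nonneg_left (humono hkj) (hv_pos j).le
  have cdiff2 : ∀ (ε : ℝ) (N : ℕ), (∀ m, N ≤ m → |c m - c (m - 1)| ≤ ε * (v m / u m)) →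
      0 ≤ ε → ∀ k n : ℕ, N ≤ k → k ≤ n → |c n - c k| ≤ ε * ((u n - u k) / u k) := by
    intro ε N hN hε k n hNk hkn
    exact le_trans (cdiff1 ε N hN k n hNk hkn)
      (mul_le_mul_of_nonneg_left (wsum k n hkn) hε)
  -- global bounds
  set Kv : ℝ := C + v 0 with hKvdef
  have hKv0 : 0 < Kv := add_pos hC (hv_pos 0)
  have hKv : ∀ k, v k ≤ Kv := by
    intro k
    rcases Nat.eq_zero_or_pos k with h | h
    · subst h; simp only [hKvdef]; linarith
    · have h1 : v k ≤ C / k := hvC k h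
      have h2 : C / (k : ℝ) ≤ C := by
        apply div_le_self hC.le
        exact_mod_cast h
      simp only [hKvdef]
      linarith [hv_pos 0]
  have hulin : ∀ k : ℕ, u k ≤ v 0 + C * k := by
    intro k
    induction k with
    | zero => rw [hu]; simp
    | succ m ih =>
      have h1 : u (m + 1) = u m + v (m + 1) := by
        rw [hu m, hu (m + 1), Finset.sum_range_succ]
      have h2 : v (m + 1) ≤ C := by
        have h := hvC (m + 1) (by omega)
        have h3 : C / ((m : ℝ) + 1) ≤ C := by
          apply div_le_self hC.le
          have : (0:ℝ) ≤ (m:ℝ) := Nat.cast_nonneg m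
          linarith
        push_cast at h ⊢
        linarith
      push_cast at ih ⊢
      linarith
  -- linear growth bound on |a|
  obtain ⟨N₁, hN₁ge, hN₁⟩ := hl 1 one_pos
  set A₀ : ℝ := |c N₁| + v 0 / u N₁ with hA₀def
  set B₀ : ℝ := C / u N₁ with hB₀def
  have hA₀0 : 0 ≤ A₀ := add_nonneg (abs_nonneg _) (div_nonneg (hv_pos 0).le (hu0 _).le)
  have hB₀0 : 0 ≤ B₀ := div_nonneg hC.le (hu0 _).le
  have hcl : ∀ k, N₁ ≤ k → |c k| ≤ A₀ + B₀ * k := by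
    intro k hk
    have h1 : |c k - c N₁| ≤ 1 * ((u k - u N₁) / u N₁) :=
      cdiff2 1 N₁ hN₁ zero_le_one N₁ k le_rfl hk
    rw [one_mul] at h1
    have h2 : u k ≤ v 0 + C * k := hulin k
    have h3 : |c k| ≤ |c N₁| + |c k - c N₁| := by
      have := abs_add_le (c N₁) (c k - c N₁)
      simpa using this
    have h4 : (u k - u N₁) / u N₁ ≤ (v 0 + C * k) / u N₁ := by
      apply (div_le_div_iff_of_pos_right (hu0 N₁)).2
      have := hu0 N₁
      linarith
    have h5 : (v 0 + C * k) / u N₁ = v 0 / u N₁ + B₀ * k := by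
      simp only [hB₀def]
      ring
    simp only [hA₀def]
    linarith
  set A : ℝ := Kv * A₀ + ∑ j ∈ Finset.range N₁, |a j| with hAdef
  set B : ℝ := Kv * B₀ with hBdef
  have hsumabs : 0 ≤ ∑ j ∈ Finset.range N₁, |a j| :=
    Finset.sum_nonneg fun j _ => abs_nonneg _
  have hB0 : 0 ≤ B := mul_nonneg hKv0.le hB₀0
  have habs : ∀ k : ℕ, |a k| ≤ A + B * k := by
    intro k
    rcases lt_or_ge k N₁ with h | h
    · have h1 : |a k| ≤ ∑ j ∈ Finset.range N₁, |a j| :=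
        Finset.single_le_sum (fun j _ => abs_nonneg (a j)) (Finset.mem_range.2 h)
      have h2 : 0 ≤ Kv * A₀ := mul_nonneg hKv0.le hA₀0
      have h3 : (0:ℝ) ≤ B * k := mul_nonneg hB0 (Nat.cast_nonneg k)
      simp only [hAdef]
      linarith
    · calc |a k| = |c k| * v k := (hcv k).symm
        _ ≤ (A₀ + B₀ * k) * Kv := by
            apply mul_le_mul (hcl k h) (hKv k) (hv_pos k).le
            positivity
        _ = Kv * A₀ + Kv * B₀ * k := by ring
        _ ≤ A + B * k := by simp only [hAdef, hBdef]; linarith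
  -- summability package
  have Sgeo : ∀ x : ℝ, 0 ≤ x → x < 1 → Summable (fun k : ℕ => x ^ k) :=
    fun x h0 h1 => summable_geometric_of_lt_one h0 h1
  have Slin : ∀ x : ℝ, 0 ≤ x → x < 1 → ∀ b0 b1 : ℝ,
      Summable (fun k : ℕ => (b0 + b1 * (k : ℝ)) * x ^ k) := by
    intro x h0 h1 b0 b1
    have hS1 : Summable (fun k : ℕ => (k : ℝ) * x ^ k) := by
      have := summable_pow_mul_geometric_of_norm_lt_one (R := ℝ) 1
        (r := x) (by rwa [Real.norm_eq_abs, abs_of_nonneg h0])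
      simpa using this
    have h := ((Sgeo x h0 h1).mul_left b0).add (hS1.mul_left b1)
    exact h.congr (fun k => by ring)
  have Sv : ∀ x : ℝ, 0 ≤ x → x < 1 → Summable (fun k : ℕ => v k * x ^ k) := by
    intro x h0 h1
    apply Summable.of_nonneg_of_le
      (fun k => mul_nonneg (hv_pos k).le (pow_nonneg h0 k))
      (fun k => mul_le_mul_of_nonneg_right (hKv k) (pow_nonneg h0 k))
      ((Sgeo x h0 h1).mul_left Kv)
  have Sa : ∀ x : ℝ, 0 ≤ x → x < 1 → Summable (fun k : ℕ => a k * x ^ k) := by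
    intro x h0 h1
    apply Summable.of_norm_bounded (Slin x h0 h1 A B)
    intro k
    rw [Real.norm_eq_abs, abs_mul, abs_pow, abs_of_nonneg h0]
    exact mul_le_mul_of_nonneg_right (habs k) (pow_nonneg h0 k)
  -- the sequence of Abel means
  have hxseq : Tendsto (fun n : ℕ => 1 - 1 / (2 * (n : ℝ))) atTop
      (nhdsWithin 1 (Set.Iio 1)) := by
    rw [tendsto_nhdsWithin_iff]
    constructor
    · have h1 : Tendsto (fun n : ℕ => 1 / (2 * (n : ℝ))) atTop (𝓝 0) := by
        have h2 : Tendsto (fun n : ℕ => 1 / (n : ℝ)) atTop (𝓝 0) :=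
          tendsto_one_div_atTop_nhds_zero_nat
        have h3 := h2.const_mul (1 / 2 : ℝ)
        rw [mul_zero] at h3
        refine h3.congr (fun n => ?_)
        ring
      have := (tendsto_const_nhds (x := (1:ℝ)) (f := atTop (α := ℕ))).sub h1
      simpa using this
    · filter_upwards [eventually_ge_atTop 1] with n hn
      have hn0 : (0:ℝ) < (n:ℝ) := by exact_mod_cast hn
      have : 0 < 1 / (2 * (n : ℝ)) := by positivity
      simp only [Set.mem_Iio]
      linarith
  have hR : Tendsto (fun n : ℕ =>
      (∑' k : ℕ, a k * (1 - 1 / (2 * (n : ℝ))) ^ k) /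
        ∑' k : ℕ, v k * (1 - 1 / (2 * (n : ℝ))) ^ k) atTop (𝓝 sVal) := hA.comp hxseq
  -- main estimate
  have hmain : ∀ ε : ℝ, 0 < ε → ∀ᶠ n : ℕ in atTop,
      |c n - (∑' k : ℕ, a k * (1 - 1 / (2 * (n : ℝ))) ^ k) /
        ∑' k : ℕ, v k * (1 - 1 / (2 * (n : ℝ))) ^ k| ≤ 5 * ε := by
    intro ε hε
    obtain ⟨N, hNge, hN⟩ := hl ε hε
    set M : ℝ := ∑ j ∈ Finset.range N, |c N - c j| with hMdef
    have hM0 : 0 ≤ M := Finset.sum_nonneg fun j _ => abs_nonneg _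
    set K : ℝ := M * u N with hKdef
    have hK0 : 0 ≤ K := mul_nonneg hM0 (hu0 N).le
    filter_upwards [eventually_ge_atTop N,
      hu_top.eventually_ge_atTop (max 1 ((2 * K + 8 * (ε * C ^ 2)) / ε + 1))] with n hnN hun
    have hn1 : 1 ≤ n := le_trans hNge hnN
    have hnR : (1:ℝ) ≤ (n:ℝ) := by exact_mod_cast hn1
    have hnR0 : (0:ℝ) < (n:ℝ) := by linarith
    set x : ℝ := 1 - 1 / (2 * (n : ℝ)) with hxdef
    have hhalf : 1 / (2 * (n : ℝ)) ≤ 1 / 2 := by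
      rw [div_le_div_iff₀ (by linarith) (by norm_num)]
      linarith
    have hpos2n : (0:ℝ) < 1 / (2 * (n : ℝ)) := by positivity
    have hx0 : 0 ≤ x := by rw [hxdef]; linarith
    have hx1 : x < 1 := by rw [hxdef]; linarith
    have h1x : 1 - x = 1 / (2 * (n : ℝ)) := by rw [hxdef]; ring
    set D : ℝ := ∑' k : ℕ, v k * x ^ k with hDdef
    set F : ℝ := ∑' k : ℕ, a k * x ^ k with hFdef
    have SvX : Summable (fun k : ℕ => v k * x ^ k) := Sv x hx0 hx1
    have SaX : Summable (fun k : ℕ => a k * x ^ k) := Sa x hx0 hx1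
    -- lower bound for D
    have hbern : (1:ℝ) / 2 ≤ x ^ n := by
      have hh := one_add_mul_le_pow (a := -(1 / (2 * (n : ℝ)))) (by linarith) n
      have he : 1 + (n : ℝ) * (-(1 / (2 * (n : ℝ)))) = 1 / 2 := by
        field_simp
        ring
      have he2 : (1 + -(1 / (2 * (n : ℝ)))) = x := by rw [hxdef]; ring
      rw [he, he2] at hh
      exact hh
    have hDlb : u n / 2 ≤ D := by
      have h1 : ∀ k ∈ Finset.range (n + 1), v k * x ^ n ≤ v k * x ^ k := by
        intro k hk
        have hkn : k ≤ n := by have := Finset.mem_range.1 hk; omega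
        exact mul_le_mul_of_nonneg_left (pow_le_pow_of_le_one hx0 hx1.le hkn) (hv_pos k).le
      calc u n / 2 = u n * (1 / 2) := by ring
        _ ≤ u n * x ^ n := mul_le_mul_of_nonneg_left hbern (hu0 n).le
        _ = ∑ k ∈ Finset.range (n + 1), v k * x ^ n := by rw [hu n, Finset.sum_mul]
        _ ≤ ∑ k ∈ Finset.range (n + 1), v k * x ^ k := Finset.sum_le_sum h1
        _ ≤ D := Summable.sum_le_tsum _ (fun k _ => mul_nonneg (hv_pos k).le (pow_nonneg hx0 k)) SvX
    have hD0 : 0 < D := lt_of_lt_of_le (by linarith [hu0 n]) hDlb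
    -- the comparison series
    set t : ℕ → ℝ := fun k => |c n - c k| * (v k * x ^ k) with htdef
    have ht0 : ∀ k, 0 ≤ t k :=
      fun k => mul_nonneg (abs_nonneg _) (mul_nonneg (hv_pos k).le (pow_nonneg hx0 k))
    have St : Summable t := by
      apply Summable.of_nonneg_of_le ht0 (fun k => ?_)
        (Slin x hx0 hx1 (|c n| * Kv + A) B)
      have hab : |c n - c k| ≤ |c n| + |c k| := by
        have := abs_add_le (c n) (-c k)
        simpa [sub_eq_add_neg] using this
      calc t k = |c n - c k| * (v k * x ^ k) := rfl
        _ ≤ (|c n| + |c k|) * (v k * x ^ k) := by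
            apply mul_le_mul_of_nonneg_right hab
            exact mul_nonneg (hv_pos k).le (pow_nonneg hx0 k)
        _ = |c n| * (v k * x ^ k) + (|c k| * v k) * x ^ k := by ring
        _ = |c n| * (v k * x ^ k) + |a k| * x ^ k := by rw [hcv k]
        _ ≤ |c n| * (Kv * x ^ k) + (A + B * k) * x ^ k := by
            apply add_le_add
            · exact mul_le_mul_of_nonneg_left
                (mul_le_mul_of_nonneg_right (hKv k) (pow_nonneg hx0 k)) (abs_nonneg _)
            · exact mul_le_mul_of_nonneg_right (habs k) (pow_nonneg hx0 k)
        _ = (|c n| * Kv + A + B * (k:ℝ)) * x ^ k := by ring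
    -- key identity
    have key : c n * D - F = ∑' k, (c n - c k) * (v k * x ^ k) := by
      have h1 : Summable fun k : ℕ => c n * (v k * x ^ k) := SvX.mul_left _
      have h2 : ∑' k, (c n - c k) * (v k * x ^ k)
          = ∑' k, (c n * (v k * x ^ k) - a k * x ^ k) :=
        tsum_congr (fun k => by rw [← hak k]; ring)
      rw [h2, Summable.tsum_sub h1 SaX, tsum_mul_left]
    have habsle : |c n * D - F| ≤ ∑' k, t k := by
      rw [key]
      have hnorm : ∀ k, ‖(c n - c k) * (v k * x ^ k)‖ = t k := by
        intro k
        rw [Real.norm_eq_abs, abs_mul,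
          abs_of_nonneg (mul_nonneg (hv_pos k).le (pow_nonneg hx0 k))]
      have hsn : Summable fun k => ‖(c n - c k) * (v k * x ^ k)‖ :=
        St.congr (fun k => (hnorm k).symm)
      calc |∑' k, (c n - c k) * (v k * x ^ k)|
          = ‖∑' k, (c n - c k) * (v k * x ^ k)‖ := (Real.norm_eq_abs _).symm
        _ ≤ ∑' k, ‖(c n - c k) * (v k * x ^ k)‖ := norm_tsum_le_tsum_norm hsn
        _ = ∑' k, t k := tsum_congr hnorm
    -- splitting
    have hsplit : ∑' k, t k = ∑ k ∈ Finset.range (n + 1), t k + ∑' m, t (m + (n + 1)) :=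
      (Summable.sum_add_tsum_nat_add (n + 1) St).symm
    have hfr : ∑ k ∈ Finset.range (n + 1), t k
        = ∑ k ∈ Finset.range N, t k + ∑ k ∈ Finset.Ico N (n + 1), t k :=
      (Finset.sum_range_add_sum_Ico _ (by omega)).symm
    -- Front 1 : small indices
    have hsumN : ∑ k ∈ Finset.range N, v k ≤ u N := by
      rw [hu N]
      apply Finset.sum_le_sum_of_subset_of_nonneg
      · exact Finset.range_subset_range.2 (by omega)
      · exact fun i _ _ => (hv_pos i).le
    have hcnN : |c n - c N| ≤ ε * (u n / u N) := by
      refine le_trans (cdiff2 ε N hN hε.le N n le_rfl hnN) ?_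
      apply mul_le_mul_of_nonneg_left ?_ hε.le
      apply (div_le_div_iff_of_pos_right (hu0 N)).2
      linarith [hu0 N]
    have hF1 : ∑ k ∈ Finset.range N, t k ≤ ε * u n + K := by
      have hterm : ∀ k ∈ Finset.range N, t k ≤ (ε * (u n / u N) + M) * v k := by
        intro k hk
        have hM1 : |c N - c k| ≤ M :=
          Finset.single_le_sum (f := fun j => |c N - c j|)
            (fun j _ => abs_nonneg _) hk
        have h1 : |c n - c k| ≤ ε * (u n / u N) + M :=
          le_trans (abs_sub_le (c n) (c N) (c k)) (add_le_add hcnN hM1)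
        have hxk1 : x ^ k ≤ 1 := pow_le_one₀ hx0 hx1.le
        calc t k = |c n - c k| * (v k * x ^ k) := rfl
          _ ≤ (ε * (u n / u N) + M) * (v k * x ^ k) := by
              apply mul_le_mul_of_nonneg_right h1
              exact mul_nonneg (hv_pos k).le (pow_nonneg hx0 k)
          _ ≤ (ε * (u n / u N) + M) * (v k * 1) := by
              apply mul_le_mul_of_nonneg_left
                (mul_le_mul_of_nonneg_left hxk1 (hv_pos k).le)
              have : 0 ≤ ε * (u n / u N) :=
                mul_nonneg hε.le (div_nonneg (hu0 n).le (hu0 N).le)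
              linarith
          _ = (ε * (u n / u N) + M) * v k := by rw [mul_one]
      calc ∑ k ∈ Finset.range N, t k
          ≤ ∑ k ∈ Finset.range N, (ε * (u n / u N) + M) * v k := Finset.sum_le_sum hterm
        _ = (ε * (u n / u N) + M) * ∑ k ∈ Finset.range N, v k := by rw [Finset.mul_sum]
        _ ≤ (ε * (u n / u N) + M) * u N := by
            apply mul_le_mul_of_nonneg_left hsumN
            have : 0 ≤ ε * (u n / u N) :=
              mul_nonneg hε.le (div_nonneg (hu0 n).le (hu0 N).le)
            linarith
        _ = ε * u n + K := by
            rw [hKdef, add_mul, mul_assoc, div_mul_cancel₀ _ (hu0 N).ne']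
    -- Front 2 : middle indices
    have hF2 : ∑ k ∈ Finset.Ico N (n + 1), t k ≤ ε * u n := by
      have hterm : ∀ k ∈ Finset.Ico N (n + 1),
          t k ≤ ∑ j ∈ Finset.Ico (k + 1) (n + 1), ε * (v k * (v j / u j)) := by
        intro k hk
        obtain ⟨hk1, hk2⟩ := Finset.mem_Ico.1 hk
        have h1 : |c n - c k| ≤ ε * ∑ j ∈ Finset.Ico (k + 1) (n + 1), v j / u j :=
          cdiff1 ε N hN k n hk1 (by omega)
        have hsum0 : 0 ≤ ∑ j ∈ Finset.Ico (k + 1) (n + 1), v j / u j :=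
          Finset.sum_nonneg fun j _ => div_nonneg (hv_pos j).le (hu0 j).le
        have hxk1 : x ^ k ≤ 1 := pow_le_one₀ hx0 hx1.le
        calc t k = |c n - c k| * (v k * x ^ k) := rfl
          _ ≤ (ε * ∑ j ∈ Finset.Ico (k + 1) (n + 1), v j / u j) * (v k * x ^ k) := by
              apply mul_le_mul_of_nonneg_right h1
              exact mul_nonneg (hv_pos k).le (pow_nonneg hx0 k)
          _ ≤ (ε * ∑ j ∈ Finset.Ico (k + 1) (n + 1), v j / u j) * (v k * 1) := by
              apply mul_le_mul_of_nonneg_left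
                (mul_le_mul_of_nonneg_left hxk1 (hv_pos k).le)
              exact mul_nonneg hε.le hsum0
          _ = ∑ j ∈ Finset.Ico (k + 1) (n + 1), ε * (v k * (v j / u j)) := by
              rw [mul_one, Finset.mul_sum, Finset.sum_mul]
              exact Finset.sum_congr rfl fun j _ => by ring
      have hswap : ∑ k ∈ Finset.Ico N (n + 1), ∑ j ∈ Finset.Ico (k + 1) (n + 1),
            ε * (v k * (v j / u j))
          = ∑ j ∈ Finset.Ico (N + 1) (n + 1), ∑ k ∈ Finset.Ico N j,
            ε * (v k * (v j / u j)) := by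
        apply Finset.sum_comm'
        intro k j
        simp only [Finset.mem_Ico]
        omega
      have hinner : ∀ j ∈ Finset.Ico (N + 1) (n + 1),
          ∑ k ∈ Finset.Ico N j, ε * (v k * (v j / u j)) ≤ ε * v j := by
        intro j hj
        have hsub : ∑ k ∈ Finset.Ico N j, v k ≤ u j := by
          rw [hu j]
          apply Finset.sum_le_sum_of_subset_of_nonneg
          · intro i hi
            simp only [Finset.mem_Ico] at hi
            simp only [Finset.mem_range]
            omega
          · exact fun i _ _ => (hv_pos i).le
        calc ∑ k ∈ Finset.Ico N j, ε * (v k * (v j / u j))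
            = (ε * (v j / u j)) * ∑ k ∈ Finset.Ico N j, v k := by
              rw [Finset.mul_sum]
              exact Finset.sum_congr rfl fun k _ => by ring
          _ ≤ (ε * (v j / u j)) * u j := by
              apply mul_le_mul_of_nonneg_left hsub
              exact mul_nonneg hε.le (div_nonneg (hv_pos j).le (hu0 j).le)
          _ = ε * v j := by rw [mul_assoc, div_mul_cancel₀ _ (hu0 j).ne']
      have hlast : ∑ j ∈ Finset.Ico (N + 1) (n + 1), v j ≤ u n := by
        rw [hu n]
        apply Finset.sum_le_sum_of_subset_of_nonneg
        · intro i hi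
          simp only [Finset.mem_Ico] at hi
          simp only [Finset.mem_range]
          omega
        · exact fun i _ _ => (hv_pos i).le
      calc ∑ k ∈ Finset.Ico N (n + 1), t k
          ≤ ∑ k ∈ Finset.Ico N (n + 1), ∑ j ∈ Finset.Ico (k + 1) (n + 1),
              ε * (v k * (v j / u j)) := Finset.sum_le_sum hterm
        _ = ∑ j ∈ Finset.Ico (N + 1) (n + 1), ∑ k ∈ Finset.Ico N j,
              ε * (v k * (v j / u j)) := hswap
        _ ≤ ∑ j ∈ Finset.Ico (N + 1) (n + 1), ε * v j := Finset.sum_le_sum hinner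
        _ = ε * ∑ j ∈ Finset.Ico (N + 1) (n + 1), v j := by rw [Finset.mul_sum]
        _ ≤ ε * u n := mul_le_mul_of_nonneg_left hlast hε.le
    -- Tail
    have hne1 : ((n:ℝ) + 1) ≠ 0 := by positivity
    have hneun : u n ≠ 0 := (hu0 n).ne'
    have htt : ∀ m : ℕ, t (m + (n + 1))
        ≤ (ε * C ^ 2 / (((n:ℝ) + 1) ^ 2 * u n)) * (((m:ℝ) + 1) * x ^ m) := by
      intro m
      have hk : n ≤ m + (n + 1) := by omega
      have h1 : |c n - c (m + (n + 1))| ≤ ε * ((u (m + (n + 1)) - u n) / u n) := by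
        rw [abs_sub_comm]
        exact cdiff2 ε N hN hε.le n (m + (n + 1)) hnN hk
      have h2 : u (m + (n + 1)) - u n ≤ C * ((m:ℝ) + 1) / ((n:ℝ) + 1) := by
        rw [udiff n (m + (n + 1)) hk]
        have hb : ∀ j ∈ Finset.Ico (n + 1) (m + (n + 1) + 1), v j ≤ C / ((n:ℝ) + 1) := by
          intro j hj
          have hj1 : n + 1 ≤ j := (Finset.mem_Ico.1 hj).1
          have hj0 : (0:ℝ) < (j:ℝ) := by
            have : (1:ℕ) ≤ j := by omega
            exact_mod_cast Nat.lt_of_lt_of_le Nat.zero_lt_one this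
          calc v j ≤ C / (j:ℝ) := hvC j (by omega)
            _ ≤ C / ((n:ℝ) + 1) := by
                rw [div_le_div_iff₀ hj0 (by positivity)]
                have hcast : ((n:ℝ) + 1) ≤ (j:ℝ) := by exact_mod_cast hj1
                nlinarith
        calc ∑ j ∈ Finset.Ico (n + 1) (m + (n + 1) + 1), v j
            ≤ ∑ _j ∈ Finset.Ico (n + 1) (m + (n + 1) + 1), C / ((n:ℝ) + 1) :=
              Finset.sum_le_sum hb
          _ = ((m:ℝ) + 1) * (C / ((n:ℝ) + 1)) := by
              rw [Finset.sum_const, Nat.card_Ico]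
              have hcard : m + (n + 1) + 1 - (n + 1) = m + 1 := by omega
              rw [hcard, nsmul_eq_mul]
              push_cast
              ring
          _ = C * ((m:ℝ) + 1) / ((n:ℝ) + 1) := by ring
      have h3 : v (m + (n + 1)) ≤ C / ((n:ℝ) + 1) := by
        have hj0 : (0:ℝ) < ((m + (n + 1) : ℕ):ℝ) := by positivity
        calc v (m + (n + 1)) ≤ C / ((m + (n + 1) : ℕ):ℝ) := hvC _ (by omega)
          _ ≤ C / ((n:ℝ) + 1) := by
              rw [div_le_div_iff₀ hj0 (by positivity)]
              have hcast : ((n:ℝ) + 1) ≤ ((m + (n + 1) : ℕ):ℝ) := by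
                push_cast
                linarith [Nat.cast_nonneg (α := ℝ) m]
              nlinarith
      have hxk : x ^ (m + (n + 1)) ≤ x ^ m :=
        pow_le_pow_of_le_one hx0 hx1.le (by omega)
      have hA1 : |c n - c (m + (n + 1))|
          ≤ ε * (C * ((m:ℝ) + 1) / ((n:ℝ) + 1) / u n) := by
        refine le_trans h1 (mul_le_mul_of_nonneg_left ?_ hε.le)
        exact (div_le_div_iff_of_pos_right (hu0 n)).2 h2
      have hB1 : v (m + (n + 1)) * x ^ (m + (n + 1)) ≤ (C / ((n:ℝ) + 1)) * x ^ m := by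
        apply mul_le_mul h3 hxk (pow_nonneg hx0 _) (by positivity)
      calc t (m + (n + 1)) = |c n - c (m + (n + 1))|
            * (v (m + (n + 1)) * x ^ (m + (n + 1))) := rfl
        _ ≤ (ε * (C * ((m:ℝ) + 1) / ((n:ℝ) + 1) / u n)) * ((C / ((n:ℝ) + 1)) * x ^ m) := by
            apply mul_le_mul hA1 hB1
            · exact mul_nonneg (hv_pos _).le (pow_nonneg hx0 _)
            · have : (0:ℝ) ≤ C * ((m:ℝ) + 1) / ((n:ℝ) + 1) / u n := by
                apply div_nonneg _ (hu0 n).le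
                positivity
              exact mul_nonneg hε.le this
        _ = (ε * C ^ 2 / (((n:ℝ) + 1) ^ 2 * u n)) * (((m:ℝ) + 1) * x ^ m) := by
            field_simp
    have hgs : Summable (fun m : ℕ => ((m:ℝ) + 1) * x ^ m) :=
      (Slin x hx0 hx1 1 1).congr (fun m => by ring)
    have hgsum : ∑' m : ℕ, ((m:ℝ) + 1) * x ^ m = (2 * (n:ℝ)) ^ 2 := by
      have hS1 : Summable (fun m : ℕ => (m : ℝ) * x ^ m) := by
        have := summable_pow_mul_geometric_of_norm_lt_one (R := ℝ) 1
          (r := x) (by rwa [Real.norm_eq_abs, abs_of_nonneg hx0])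
        simpa using this
      have h1 : ∑' m : ℕ, (m:ℝ) * x ^ m = x / (1 - x) ^ 2 :=
        tsum_coe_mul_geometric_of_norm_lt_one (by rwa [Real.norm_eq_abs, abs_of_nonneg hx0])
      have h2 : ∑' m : ℕ, x ^ m = (1 - x)⁻¹ := tsum_geometric_of_lt_one hx0 hx1
      have h3 : ∑' m : ℕ, ((m:ℝ) + 1) * x ^ m
          = ∑' m : ℕ, ((m:ℝ) * x ^ m + x ^ m) := tsum_congr fun m => by ring
      rw [h3, Summable.tsum_add hS1 (Sgeo x hx0 hx1), h1, h2]
      have hone : (1:ℝ) - x ≠ 0 := by rw [h1x]; positivity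
      rw [h1x, hxdef]
      have hne : (n:ℝ) ≠ 0 := hnR0.ne'
      field_simp
      ring
    have htail : ∑' m, t (m + (n + 1)) ≤ 4 * (ε * C ^ 2) / u n := by
      have hSt' : Summable (fun m => t (m + (n + 1))) :=
        (summable_nat_add_iff (n + 1)).2 St
      have hco : (0:ℝ) ≤ ε * C ^ 2 / (((n:ℝ) + 1) ^ 2 * u n) := by
        apply div_nonneg (by positivity)
        exact mul_nonneg (by positivity) (hu0 n).le
      calc ∑' m, t (m + (n + 1))
          ≤ ∑' m : ℕ, (ε * C ^ 2 / (((n:ℝ) + 1) ^ 2 * u n)) * (((m:ℝ) + 1) * x ^ m) :=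
            Summable.tsum_le_tsum htt hSt' (hgs.mul_left _)
        _ = (ε * C ^ 2 / (((n:ℝ) + 1) ^ 2 * u n)) * (2 * (n:ℝ)) ^ 2 := by
            rw [tsum_mul_left, hgsum]
        _ ≤ (ε * C ^ 2 / (((n:ℝ) + 1) ^ 2 * u n)) * (4 * ((n:ℝ) + 1) ^ 2) := by
            apply mul_le_mul_of_nonneg_left _ hco
            nlinarith
        _ = 4 * (ε * C ^ 2) / u n := by
            field_simp
    -- put it together
    have hT : ∑' k, t k ≤ 2 * (ε * u n) + K + 4 * (ε * C ^ 2) / u n := by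
      rw [hsplit, hfr]
      linarith [hF1, hF2, htail]
    have hcR : c n - F / D = (c n * D - F) / D := by
      rw [sub_div, mul_div_cancel_right₀ _ hD0.ne']
    have hnum0 : (0:ℝ) ≤ 2 * (ε * u n) + K + 4 * (ε * C ^ 2) / u n := by
      have h1 : (0:ℝ) ≤ ε * u n := mul_nonneg hε.le (hu0 n).le
      have h2 : (0:ℝ) ≤ 4 * (ε * C ^ 2) / u n := div_nonneg (by positivity) (hu0 n).le
      linarith
    have hfinal1 : |c n - F / D| ≤ (2 * (ε * u n) + K + 4 * (ε * C ^ 2) / u n) / (u n / 2) := by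
      rw [hcR, abs_div, abs_of_pos hD0]
      exact div_le_div₀ hnum0 (le_trans habsle hT) (half_pos (hu0 n)) hDlb
    have hun1 : (1:ℝ) ≤ u n := le_trans (le_max_left _ _) hun
    have hun2 : (2 * K + 8 * (ε * C ^ 2)) / ε + 1 ≤ u n := le_trans (le_max_right _ _) hun
    have harith : (2 * (ε * u n) + K + 4 * (ε * C ^ 2) / u n) / (u n / 2) ≤ 5 * ε := by
      have h8 : 4 * (ε * C ^ 2) / u n ≤ 4 * (ε * C ^ 2) :=
        div_le_self (by positivity) hun1
      have h9 : 2 * K + 8 * (ε * C ^ 2) + ε ≤ ε * u n := by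
        have h := mul_le_mul_of_nonneg_left hun2 hε.le
        have heq : ε * ((2 * K + 8 * (ε * C ^ 2)) / ε + 1) = 2 * K + 8 * (ε * C ^ 2) + ε := by
          field_simp
        rw [heq] at h
        exact h
      rw [div_le_iff₀ (half_pos (hu0 n))]
      linarith [h8, h9, hε.le]
    exact le_trans hfinal1 harith
  -- conclusion
  have hdiff0 : Tendsto (fun n : ℕ => c n -
      (∑' k : ℕ, a k * (1 - 1 / (2 * (n : ℝ))) ^ k) /
        ∑' k : ℕ, v k * (1 - 1 / (2 * (n : ℝ))) ^ k) atTop (𝓝 0) := by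
    rw [NormedAddCommGroup.tendsto_nhds_zero]
    intro ε hε
    filter_upwards [hmain (ε / 6) (by positivity)] with n hn
    rw [Real.norm_eq_abs]
    exact lt_of_le_of_lt hn (by linarith)
  have hfin := hdiff0.add hR
  rw [zero_add] at hfin
  refine hfin.congr (fun n => ?_)
  simp

/-- Theorem 9(v): if `v_n > 0`, `v_n = O(1/n)`, `u_n → ∞`, `D(x)` has
radius of convergence `1`, and the differences of `(p∘qs)_n/v_n` are `o(v_n/u_n)`, then
`N(x)/D(x) → s (x → 1⁻)` implies `(p∘qs)_n/v_n → s`. -/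
theorem powerSeries_to_ratio_littleO (p q u s : ℕ → ℝ) (sVal : ℝ)
    (hv_pos : ∀ n, 0 < inc u n)
    (hvO : (fun n => inc u n) =O[atTop] (fun n : ℕ => 1 / (n : ℝ)))
    (hu_top : Tendsto u atTop atTop)
    (hconv : ∀ x : ℝ, |x| < 1 → Summable fun n => inc u n * x ^ n)
    (hdiv : ∀ x : ℝ, 1 < |x| → ¬ Summable fun n => inc u n * x ^ n)
    (hlittle : (fun n => vconv p (fun k => q k * s k) n / inc u n -
        vconv p (fun k => q k * s k) (n - 1) / inc u (n - 1))
      =o[atTop] (fun n => inc u n / u n))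
    (hA : Tendsto (fun x : ℝ =>
        (∑' n : ℕ, vconv p (fun k => q k * s k) n * x ^ n) /
          ∑' n : ℕ, inc u n * x ^ n)
      (nhdsWithin 1 (Set.Iio 1)) (𝓝 sVal)) :
    Tendsto (fun n => vconv p (fun k => q k * s k) n / inc u n) atTop (𝓝 sVal) := by
  -- partial sums of the increments recover `u`
  have hu' : ∀ n, u n = ∑ k ∈ Finset.range (n + 1), inc u k := by
    intro n
    induction n with
    | zero => simp [inc]
    | succ m ih =>
      rw [Finset.sum_range_succ, ← ih,
        show inc u (m + 1) = u (m + 1) - u m from rfl]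
      ring
  have hu0 : ∀ n, 0 < u n := by
    intro n
    rw [hu']
    exact Finset.sum_pos (fun i _ => hv_pos i) Finset.nonempty_range_add_one
  -- a uniform `C / n` bound for the increments
  obtain ⟨C₀, hC₀⟩ := hvO.bound
  rw [eventually_atTop] at hC₀
  obtain ⟨N₀, hN₀⟩ := hC₀
  set N₀' : ℕ := max N₀ 1 with hN₀'def
  set C : ℝ := max C₀ 0 + (∑ k ∈ Finset.range N₀', (k : ℝ) * inc u k) + 1 with hCdef
  have hsum0 : 0 ≤ ∑ k ∈ Finset.range N₀', (k : ℝ) * inc u k :=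
    Finset.sum_nonneg fun k _ => mul_nonneg (Nat.cast_nonneg k) (hv_pos k).le
  have hmax0 : (0:ℝ) ≤ max C₀ 0 := le_max_right _ _
  have hCpos : 0 < C := by rw [hCdef]; linarith
  have hvC : ∀ n : ℕ, 1 ≤ n → inc u n ≤ C / n := by
    intro n hn
    have hn0 : (0:ℝ) < (n:ℝ) := by exact_mod_cast hn
    rcases le_or_gt N₀' n with h | h
    · have h1 := hN₀ n (le_trans (le_max_left _ _) h)
      have h2 : ‖(1:ℝ) / (n:ℝ)‖ = 1 / (n:ℝ) := by
        rw [Real.norm_eq_abs, abs_of_pos (by positivity)]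
      have h3 : inc u n ≤ C₀ * (1 / (n:ℝ)) := by
        calc inc u n ≤ |inc u n| := le_abs_self _
          _ = ‖inc u n‖ := (Real.norm_eq_abs _).symm
          _ ≤ C₀ * ‖(1:ℝ) / (n:ℝ)‖ := h1
          _ = C₀ * (1 / (n:ℝ)) := by rw [h2]
      have h4 : C₀ ≤ C := by rw [hCdef]; have := le_max_left C₀ 0; linarith
      calc inc u n ≤ C₀ * (1 / (n:ℝ)) := h3
        _ ≤ C * (1 / (n:ℝ)) := mul_le_mul_of_nonneg_right h4 (by positivity)
        _ = C / n := by ring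
    · rw [le_div_iff₀ hn0]
      have h1 : inc u n * (n:ℝ) = (n:ℝ) * inc u n := by ring
      have h2 : (n:ℝ) * inc u n ≤ ∑ k ∈ Finset.range N₀', (k : ℝ) * inc u k :=
        Finset.single_le_sum (f := fun k : ℕ => (k : ℝ) * inc u k)
          (fun k _ => mul_nonneg (Nat.cast_nonneg k) (hv_pos k).le)
          (Finset.mem_range.2 h)
      rw [h1, hCdef]
      linarith
  -- the little-o hypothesis in quantitative form
  have hl : ∀ ε : ℝ, 0 < ε → ∃ N : ℕ, 1 ≤ N ∧ ∀ n, N ≤ n →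
      |vconv p (fun k => q k * s k) n / inc u n -
        vconv p (fun k => q k * s k) (n - 1) / inc u (n - 1)| ≤ ε * (inc u n / u n) := by
    intro ε hε
    have h := hlittle.def hε
    rw [eventually_atTop] at h
    obtain ⟨N, hN⟩ := h
    refine ⟨max N 1, le_max_right _ _, fun n hn => ?_⟩
    have h1 := hN n (le_trans (le_max_left _ _) hn)
    rwa [Real.norm_eq_abs, Real.norm_eq_abs,
      abs_of_pos (div_pos (hv_pos n) (hu0 n))] at h1
  exact tauber_core (inc u) u (vconv p (fun k => q k * s k)) sVal C hu' hv_pos hCpos hvC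
    hu_top hl hA
end
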